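/- Let A', A'' be a split of a list A into two disjoint complementary subsequences. If Λ_k(A) = L and Λ_s(A') = ℓ with s < k, then Λ_{k−s+1}(A'') ≥ L − ℓ. -/

import Mathlib

def LDS (a : List ℤ) : ℕ :=
  ((a.sublists.filter (fun l => decide (l.IsChain (· > ·)))).map List.length).foldr max 0

inductive Interleave : List ℤ → List ℤ → List ℤ → Prop
  | nil : Interleave [] [] []
  | left {A B C : List ℤ} (x : ℤ) : Interleave A B C → Interleave (x :: A) B (x :: C)
  | right {A B C : List ℤ} (x : ℤ) : Interleave A B C → Interleave A (x :: B) (x :: C)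

inductive KInterleave : {k : ℕ} → (Fin k → List ℤ) → List ℤ → Prop
  | nil {k : ℕ} : KInterleave (fun _ : Fin k => []) []
  | cons {k : ℕ} (i : Fin k) (x : ℤ) {qs : Fin k → List ℤ} {C : List ℤ} :
      KInterleave qs C → KInterleave (Function.update qs i (x :: qs i)) (x :: C)

noncomputable def Lam (m : ℕ) (X : List ℤ) : ℕ :=
  sInf {r | ∃ (qs : Fin m → List ℤ) (C : List ℤ),
    KInterleave qs X ∧ KInterleave qs C ∧ LDS C = r}

/-! ### Generic interleavings -/

inductive ILv {α : Type} : List α → List α → List α → Prop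
  | nil : ILv [] [] []
  | left {A B C : List α} (x : α) : ILv A B C → ILv (x :: A) B (x :: C)
  | right {A B C : List α} (x : α) : ILv A B C → ILv A (x :: B) (x :: C)

lemma ilv_of_interleave {u v w : List ℤ} (h : Interleave u v w) : ILv u v w := by
  induction h with
  | nil => exact .nil
  | left x _ ih => exact .left x ih
  | right x _ ih => exact .right x ih

lemma interleave_of_ilv {u v w : List ℤ} (h : ILv u v w) : Interleave u v w := by
  induction h with
  | nil => exact .nil
  | left x _ ih => exact .left x ih
  | right x _ ih => exact .right x ih

lemma ILv.nil_left' {α : Type} {v w : List α} (h : ILv [] v w) : w = v := by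
  generalize hu : ([] : List α) = u at h
  induction h with
  | nil => rfl
  | left x _ ih => simp at hu
  | right x h ih => rw [ih hu]

lemma ILv.nil_right' {α : Type} {u w : List α} (h : ILv u [] w) : w = u := by
  generalize hv : ([] : List α) = v at h
  induction h with
  | nil => rfl
  | left x h ih => rw [ih hv]
  | right x _ ih => simp at hv

lemma ilv_nil_left {α : Type} (v : List α) : ILv [] v v := by
  induction v with
  | nil => exact .nil
  | cons x v ih => exact .right x ih

lemma ilv_append_self {α : Type} (u v : List α) : ILv u v (u ++ v) := by
  induction u with
  | nil => simpa using ilv_nil_left v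
  | cons x u ih => exact .left x ih

lemma ILv.prepend_left {α : Type} {u v w : List α} (a : List α) (h : ILv u v w) :
    ILv (a ++ u) v (a ++ w) := by
  induction a with
  | nil => exact h
  | cons x a ih => exact .left x ih

lemma ILv.prepend_right {α : Type} {u v w : List α} (a : List α) (h : ILv u v w) :
    ILv u (a ++ v) (a ++ w) := by
  induction a with
  | nil => exact h
  | cons x a ih => exact .right x ih

lemma ILv.map {α β : Type} {u v w : List α} (f : α → β) (h : ILv u v w) :
    ILv (u.map f) (v.map f) (w.map f) := by
  induction h with
  | nil => exact .nil
  | left x _ ih => exact .left (f x) ih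
  | right x _ ih => exact .right (f x) ih

lemma ILv.filter {α : Type} {u v w : List α} (P : α → Bool) (h : ILv u v w) :
    ILv (u.filter P) (v.filter P) (w.filter P) := by
  induction h with
  | nil => exact .nil
  | left x _ ih =>
    by_cases hx : P x = true
    · simpa [List.filter_cons, hx] using ILv.left x ih
    · simpa [List.filter_cons, hx] using ih
  | right x _ ih =>
    by_cases hx : P x = true
    · simpa [List.filter_cons, hx] using ILv.right x ih
    · simpa [List.filter_cons, hx] using ih

lemma ILv.length_eq {α : Type} {u v w : List α} (h : ILv u v w) :
    w.length = u.length + v.length := by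
  induction h with
  | nil => simp
  | left x _ ih => simp [ih]; omega
  | right x _ ih => simp [ih]; omega

lemma ILv.left_sublist {α : Type} {u v w : List α} (h : ILv u v w) : List.Sublist u w := by
  induction h with
  | nil => simp
  | left x _ ih => exact ih.cons₂ x
  | right x _ ih => exact ih.cons x

lemma ILv.right_sublist {α : Type} {u v w : List α} (h : ILv u v w) : List.Sublist v w := by
  induction h with
  | nil => simp
  | left x _ ih => exact ih.cons x
  | right x _ ih => exact ih.cons₂ x

lemma sublist_of_ilv {α : Type} {u v w l : List α} (h : ILv u v w) (hl : List.Sublist l w) :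
    ∃ lu lv, List.Sublist lu u ∧ List.Sublist lv v ∧ ILv lu lv l := by
  induction h generalizing l with
  | nil =>
    rw [List.sublist_nil.1 hl]
    exact ⟨[], [], by simp, by simp, .nil⟩
  | left x h ih =>
    rcases List.sublist_cons_iff.1 hl with hl | ⟨r, rfl, hr⟩
    · rcases ih hl with ⟨lu, lv, h1, h2, h3⟩
      exact ⟨lu, lv, h1.cons x, h2, h3⟩
    · rcases ih hr with ⟨lu, lv, h1, h2, h3⟩
      exact ⟨x :: lu, lv, h1.cons₂ x, h2, .left x h3⟩
  | right x h ih =>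
    rcases List.sublist_cons_iff.1 hl with hl | ⟨r, rfl, hr⟩
    · rcases ih hl with ⟨lu, lv, h1, h2, h3⟩
      exact ⟨lu, lv, h1, h2.cons x, h3⟩
    · rcases ih hr with ⟨lu, lv, h1, h2, h3⟩
      exact ⟨lu, x :: lv, h1, h2.cons₂ x, .right x h3⟩

/-! ### LDS lemmas -/

lemma le_foldr_max {x : ℕ} {L : List ℕ} (h : x ∈ L) : x ≤ L.foldr max 0 := by
  induction L with
  | nil => simp at h
  | cons a L ih =>
    rcases List.mem_cons.1 h with rfl | h
    · exact le_max_left _ _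
    · exact le_trans (ih h) (le_max_right _ _)

lemma foldr_max_le {n : ℕ} {L : List ℕ} (h : ∀ x ∈ L, x ≤ n) : L.foldr max 0 ≤ n := by
  induction L with
  | nil => simp
  | cons a L ih =>
    exact max_le (h a (by simp)) (ih fun x hx => h x (List.mem_cons_of_mem _ hx))

lemma le_LDS {l a : List ℤ} (hsub : List.Sublist l a) (hch : l.Chain' (· > ·)) : l.length ≤ LDS a := by
  apply le_foldr_max
  apply List.mem_map.2
  refine ⟨l, ?_, rfl⟩
  apply List.mem_filter.2
  exact ⟨List.mem_sublists.2 hsub, by simpa [List.Chain'] using hch⟩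

lemma LDS_le {a : List ℤ} {n : ℕ}
    (h : ∀ l : List ℤ, List.Sublist l a → l.Chain' (· > ·) → l.length ≤ n) : LDS a ≤ n := by
  apply foldr_max_le
  intro x hx
  rcases List.mem_map.1 hx with ⟨l, hl, rfl⟩
  rcases List.mem_filter.1 hl with ⟨hl1, hl2⟩
  exact h l (List.mem_sublists.1 hl1) (show l.IsChain (· > ·) by simpa using hl2)

lemma LDS_ilv_le {u v w : List ℤ} (h : ILv u v w) : LDS w ≤ LDS u + LDS v := by
  apply LDS_le
  intro l hl hch
  rcases sublist_of_ilv h hl with ⟨lu, lv, h1, h2, h3⟩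
  have hchu : lu.Chain' (· > ·) := by
    rw [List.Chain', List.isChain_iff_pairwise] at hch ⊢
    exact hch.sublist h3.left_sublist
  have hchv : lv.Chain' (· > ·) := by
    rw [List.Chain', List.isChain_iff_pairwise] at hch ⊢
    exact hch.sublist h3.right_sublist
  have hlen := h3.length_eq
  have h1' := le_LDS h1 hchu
  have h2' := le_LDS h2 hchv
  omega

/-! ### Tagged lists and KInterleave -/

lemma kint_of_tagged {k : ℕ} : ∀ (L : List (Fin k × ℤ)) {C : List ℤ} {qs : Fin k → List ℤ},
    L.map Prod.snd = C →
    (∀ i, (L.filter (fun e => decide (e.1 = i))).map Prod.snd = qs i) →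
    KInterleave qs C := by
  intro L
  induction L with
  | nil =>
    intro C qs hC hqs
    have h1 : qs = fun _ => [] := funext fun i => by simpa using (hqs i).symm
    have h2 : C = [] := by simpa using hC.symm
    rw [h1, h2]; exact .nil
  | cons e L ih =>
    intro C qs hC hqs
    obtain ⟨i, x⟩ := e
    have hk : KInterleave (fun j => (L.filter (fun e => decide (e.1 = j))).map Prod.snd)
        (L.map Prod.snd) := ih rfl (fun _ => rfl)
    have hk2 := KInterleave.cons i x hk
    have hqs' : Function.update (fun j => (L.filter (fun e => decide (e.1 = j))).map Prod.snd)
        i (x :: (L.filter (fun e => decide (e.1 = i))).map Prod.snd) = qs := by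
      funext j
      rcases eq_or_ne j i with rfl | hj
      · rw [Function.update_self, ← hqs j]
        simp [List.filter_cons]
      · rw [Function.update_of_ne hj, ← hqs j]
        simp [List.filter_cons, (Ne.symm hj : ¬ i = j)]
    rw [← hC]
    simpa [hqs'] using hk2

lemma tagged_of_kint {k : ℕ} {qs : Fin k → List ℤ} {C : List ℤ} (h : KInterleave qs C) :
    ∃ L : List (Fin k × ℤ), L.map Prod.snd = C ∧
      ∀ i, (L.filter (fun e => decide (e.1 = i))).map Prod.snd = qs i := by
  induction h with
  | nil => exact ⟨[], rfl, by simp⟩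
  | cons i x h ih =>
    obtain ⟨L, hL, hf⟩ := ih
    refine ⟨(i, x) :: L, by simp [hL], fun j => ?_⟩
    rcases eq_or_ne j i with rfl | hj
    · rw [Function.update_self]
      simp [List.filter_cons, hf j]
    · rw [Function.update_of_ne hj]
      simp [List.filter_cons, (Ne.symm hj : ¬ i = j), hf j]

lemma exists_kint (m : ℕ) (hm : 0 < m) (X : List ℤ) :
    ∃ qs : Fin m → List ℤ, KInterleave qs X := by
  induction X with
  | nil => exact ⟨_, .nil⟩
  | cons x X ih =>
    obtain ⟨qs, h⟩ := ih
    exact ⟨_, .cons ⟨0, hm⟩ x h⟩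

lemma lam_set_nonempty (m : ℕ) (hm : 0 < m) (X : List ℤ) :
    {r | ∃ (qs : Fin m → List ℤ) (C : List ℤ),
      KInterleave qs X ∧ KInterleave qs C ∧ LDS C = r}.Nonempty := by
  obtain ⟨qs, h⟩ := exists_kint m hm X
  exact ⟨LDS X, qs, X, h, h, rfl⟩

/-! ### filter decompositions and merging -/

lemma filter_eq_cons' {α : Type} {P : α → Bool} :
    ∀ {l : List α} {a : α} {as : List α}, l.filter P = a :: as →
      ∃ l₁ l₂, l = l₁ ++ a :: l₂ ∧ l₁.filter P = [] ∧ P a = true ∧ l₂.filter P = as := by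
  intro l
  induction l with
  | nil => intro a as h; simp at h
  | cons b l ih =>
    intro a as h
    by_cases hb : P b = true
    · rw [List.filter_cons_of_pos hb] at h
      obtain ⟨rfl, rfl⟩ : b = a ∧ l.filter P = as := ⟨(List.cons.inj h).1, (List.cons.inj h).2⟩
      exact ⟨[], l, rfl, rfl, hb, rfl⟩
    · rw [List.filter_cons_of_neg (by simpa using hb)] at h
      obtain ⟨l₁, l₂, rfl, h1, h2, h3⟩ := ih h
      refine ⟨b :: l₁, l₂, rfl, ?_, h2, h3⟩
      rw [List.filter_cons_of_neg (by simpa using hb), h1]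

lemma ilv_lift {u v w : List ℤ} (h : Interleave u v w) :
    ∀ {α : Type} (U V : List (α × ℤ)), U.map Prod.snd = u → V.map Prod.snd = v →
      ∃ W : List (α × ℤ), W.map Prod.snd = w ∧ ILv U V W := by
  induction h with
  | nil =>
    intro α U V hU hV
    rw [List.map_eq_nil_iff] at hU hV
    subst hU; subst hV
    exact ⟨[], by simp, .nil⟩
  | left x h ih =>
    intro α U V hU hV
    cases U with
    | nil => simp at hU
    | cons e U₀ =>
      simp only [List.map_cons, List.cons.injEq] at hU
      obtain ⟨W₀, hW1, hW2⟩ := ih U₀ V hU.2 hV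
      exact ⟨e :: W₀, by simp [hW1, hU.1], .left e hW2⟩
  | right x h ih =>
    intro α U V hU hV
    cases V with
    | nil => simp at hV
    | cons e V₀ =>
      simp only [List.map_cons, List.cons.injEq] at hV
      obtain ⟨W₀, hW1, hW2⟩ := ih U V₀ hU hV.2
      exact ⟨e :: W₀, by simp [hW1, hV.1], .right e hW2⟩

lemma merge_lemma {k : ℕ} {p q r : List ℤ} (hr : Interleave p q r) :
    ∀ (U V : List (Fin k × ℤ)) (c₀ : Fin k),
      (U.filter (fun e => decide (e.1 = c₀))).map Prod.snd = p →
      (V.filter (fun e => decide (e.1 = c₀))).map Prod.snd = q →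
      ∃ W, ILv U V W ∧ (W.filter (fun e => decide (e.1 = c₀))).map Prod.snd = r := by
  induction hr with
  | nil =>
    intro U V c₀ hU hV
    rw [List.map_eq_nil_iff] at hU hV
    exact ⟨U ++ V, ilv_append_self U V, by simp [List.filter_append, hU, hV]⟩
  | left x h ih =>
    intro U V c₀ hU hV
    cases hF : U.filter (fun e => decide (e.1 = c₀)) with
    | nil => rw [hF] at hU; simp at hU
    | cons a F =>
      rw [hF] at hU
      simp only [List.map_cons, List.cons.injEq] at hU
      obtain ⟨U₁, U₂, rfl, hU₁, ha, hU₂⟩ := filter_eq_cons' hF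
      obtain ⟨W₀, hW1, hW2⟩ := ih U₂ V c₀ (by rw [hU₂]; exact hU.2) hV
      refine ⟨U₁ ++ a :: W₀, ILv.prepend_left U₁ (ILv.left a hW1), ?_⟩
      simp [List.filter_append, hU₁, List.filter_cons, ha, hW2, hU.1]
  | right x h ih =>
    intro U V c₀ hU hV
    cases hF : V.filter (fun e => decide (e.1 = c₀)) with
    | nil => rw [hF] at hV; simp at hV
    | cons a F =>
      rw [hF] at hV
      simp only [List.map_cons, List.cons.injEq] at hV
      obtain ⟨V₁, V₂, rfl, hV₁, ha, hV₂⟩ := filter_eq_cons' hF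
      obtain ⟨W₀, hW1, hW2⟩ := ih U V₂ c₀ hU (by rw [hV₂]; exact hV.2)
      refine ⟨V₁ ++ a :: W₀, ILv.prepend_right V₁ (ILv.right a hW1), ?_⟩
      simp [List.filter_append, hV₁, List.filter_cons, ha, hW2, hV.1]

/-! ### retagging lemmas -/

lemma filter_retag {m n : ℕ} (g : Fin m → Fin n) (X : List (Fin m × ℤ)) (c : Fin n) (i : Fin m)
    (hiff : ∀ i', g i' = c ↔ i' = i) :
    (X.map (fun e => (g e.1, e.2))).filter (fun e => decide (e.1 = c))
      = (X.filter (fun e => decide (e.1 = i))).map (fun e => (g e.1, e.2)) := by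
  rw [List.filter_map]
  congr 1
  apply List.filter_congr
  intro e _
  show decide (g e.1 = c) = decide (e.1 = i)
  exact decide_eq_decide.mpr (hiff e.1)

lemma filter_retag_nil {m n : ℕ} (g : Fin m → Fin n) (X : List (Fin m × ℤ)) (c : Fin n)
    (hne : ∀ i', g i' ≠ c) :
    (X.map (fun e => (g e.1, e.2))).filter (fun e => decide (e.1 = c)) = [] := by
  rw [List.filter_map]
  have h : X.filter ((fun e : Fin n × ℤ => decide (e.1 = c)) ∘ (fun e => (g e.1, e.2))) = [] := by
    rw [List.filter_eq_nil_iff]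
    intro a _
    simp [hne a.1]
  rw [h, List.map_nil]

lemma snd_retag {m n : ℕ} (g : Fin m → Fin n) (X : List (Fin m × ℤ)) :
    (X.map (fun e => (g e.1, e.2))).map Prod.snd = X.map Prod.snd := by
  simp [List.map_map, Function.comp]

def emb1 (s k : ℕ) (hsk : s ≤ k) (i : Fin s) : Fin k := ⟨i.1, lt_of_lt_of_le i.2 hsk⟩

def emb2 (s k : ℕ) (hs : 0 < s) (hsk : s < k) (j : Fin (k - s + 1)) : Fin k :=
  ⟨s - 1 + j.1, by have := j.2; omega⟩

@[simp] lemma emb1_val (s k : ℕ) (hsk : s ≤ k) (i : Fin s) : (emb1 s k hsk i).1 = i.1 := rfl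

@[simp] lemma emb2_val (s k : ℕ) (hs : 0 < s) (hsk : s < k) (j : Fin (k - s + 1)) :
    (emb2 s k hs hsk j).1 = s - 1 + j.1 := rfl

/-- if `A', A''` is a split of `A`, `Λ_k(A) = L` and `Λ_s(A') = ℓ`
with `s < k`, then `Λ_{k-s+1}(A'') ≥ L - ℓ`. -/
theorem split_lower_bound (A A' A'' : List ℤ) (hsplit : Interleave A' A'' A)
    (k s L ℓ : ℕ) (hs : 0 < s) (hsk : s < k)
    (hA : Lam k A = L) (hA' : Lam s A' = ℓ) :
    L - ℓ ≤ Lam (k - s + 1) A'' := by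
  classical
  have hs' : 0 < k - s + 1 := by omega
  -- extract optimal witnesses for A' and A''
  have hmem1 : Lam s A' ∈ {r | ∃ (qs : Fin s → List ℤ) (C : List ℤ),
      KInterleave qs A' ∧ KInterleave qs C ∧ LDS C = r} :=
    Nat.sInf_mem (lam_set_nonempty s hs A')
  rw [hA'] at hmem1
  obtain ⟨qs', C', hq'A, hq'C, hC'ℓ⟩ := hmem1
  have hmem2 : Lam (k - s + 1) A'' ∈ {r | ∃ (qs : Fin (k - s + 1) → List ℤ) (C : List ℤ),
      KInterleave qs A'' ∧ KInterleave qs C ∧ LDS C = r} :=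
    Nat.sInf_mem (lam_set_nonempty (k - s + 1) hs' A'')
  obtain ⟨qs'', C'', hq''A, hq''C, hC''t⟩ := hmem2
  -- tagged versions
  obtain ⟨L1, hL1, hL1f⟩ := tagged_of_kint hq'A
  obtain ⟨M1, hM1, hM1f⟩ := tagged_of_kint hq'C
  obtain ⟨L2, hL2, hL2f⟩ := tagged_of_kint hq''A
  obtain ⟨M2, hM2, hM2f⟩ := tagged_of_kint hq''C
  -- embeddings of the index sets
  set g1 : Fin s → Fin k := emb1 s k hsk.le with hg1
  set g2 : Fin (k - s + 1) → Fin k := emb2 s k hs hsk with hg2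
  set c₀ : Fin k := ⟨s - 1, by omega⟩ with hc₀
  set i₀ : Fin s := ⟨s - 1, by omega⟩ with hi₀
  set j₀ : Fin (k - s + 1) := ⟨0, hs'⟩ with hj₀
  have hg1c : ∀ i' : Fin s, g1 i' = c₀ ↔ i' = i₀ := by
    intro i'
    rw [Fin.ext_iff, Fin.ext_iff, hg1, hc₀, hi₀]
    simp [emb1]
  have hg2c : ∀ j' : Fin (k - s + 1), g2 j' = c₀ ↔ j' = j₀ := by
    intro j'
    rw [Fin.ext_iff, Fin.ext_iff, hg2, hc₀, hj₀]
    simp [emb2]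
  -- the combined tagging of A
  obtain ⟨N, hNs, hNI⟩ := ilv_lift hsplit (L1.map (fun e => (g1 e.1, e.2)))
    (L2.map (fun e => (g2 e.1, e.2)))
    (by rw [snd_retag, hL1]) (by rw [snd_retag, hL2])
  set qs : Fin k → List ℤ := fun c => (N.filter (fun e => decide (e.1 = c))).map Prod.snd
    with hqs
  have hAq : KInterleave qs A := kint_of_tagged N hNs (fun c => by rw [hqs])
  -- the merged part r = qs c₀, and its structure
  have hNfilt := ILv.filter (fun e => decide (e.1 = c₀)) hNI
  rw [filter_retag g1 L1 c₀ i₀ hg1c, filter_retag g2 L2 c₀ j₀ hg2c] at hNfilt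
  have hr0 := ILv.map Prod.snd hNfilt
  rw [snd_retag, snd_retag, hL1f i₀, hL2f j₀] at hr0
  have hr : Interleave (qs' i₀) (qs'' j₀)
      ((N.filter (fun e => decide (e.1 = c₀))).map Prod.snd) := interleave_of_ilv hr0
  -- merge the two output interleavings
  obtain ⟨W, hWI, hWr⟩ := merge_lemma hr (M1.map (fun e => (g1 e.1, e.2)))
    (M2.map (fun e => (g2 e.1, e.2))) c₀
    (by rw [filter_retag g1 M1 c₀ i₀ hg1c, snd_retag, hM1f i₀])
    (by rw [filter_retag g2 M2 c₀ j₀ hg2c, snd_retag, hM2f j₀])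
  have hCq : KInterleave qs (W.map Prod.snd) := by
    apply kint_of_tagged W rfl
    intro c
    rcases lt_trichotomy c.1 (s - 1) with hc | hc | hc
    · -- c comes from the first family only
      have hcs : c.1 < s := by omega
      have hi : ∀ i' : Fin s, g1 i' = c ↔ i' = ⟨c.1, hcs⟩ := by
        intro i'
        rw [Fin.ext_iff, Fin.ext_iff, hg1]
        simp [emb1]
      have hj : ∀ j' : Fin (k - s + 1), g2 j' ≠ c := by
        intro j' hcontra
        have := congrArg Fin.val hcontra
        rw [hg2] at this
        simp [emb2] at this
        omega
      have h1 := ILv.filter (fun e => decide (e.1 = c)) hWI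
      rw [filter_retag_nil g2 M2 c hj] at h1
      rw [h1.nil_right', filter_retag g1 M1 c _ hi, snd_retag, hM1f]
      have h3 := ILv.filter (fun e => decide (e.1 = c)) hNI
      rw [filter_retag_nil g2 L2 c hj] at h3
      rw [hqs]
      simp only
      rw [h3.nil_right', filter_retag g1 L1 c _ hi, snd_retag, hL1f]
    · -- the merged index
      have hcc : c = c₀ := by rw [Fin.ext_iff, hc₀]; exact hc
      rw [hcc, hWr, hqs]
    · -- c comes from the second family only
      have hck : c.1 - (s - 1) < k - s + 1 := by have := c.2; omega
      have hj : ∀ j' : Fin (k - s + 1), g2 j' = c ↔ j' = ⟨c.1 - (s - 1), hck⟩ := by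
        intro j'
        rw [Fin.ext_iff, Fin.ext_iff, hg2]
        simp [emb2]
        omega
      have hi : ∀ i' : Fin s, g1 i' ≠ c := by
        intro i' hcontra
        have := congrArg Fin.val hcontra
        rw [hg1] at this
        simp [emb1] at this
        have := i'.2
        omega
      have h1 := ILv.filter (fun e => decide (e.1 = c)) hWI
      rw [filter_retag_nil g1 M1 c hi] at h1
      rw [h1.nil_left', filter_retag g2 M2 c _ hj, snd_retag, hM2f]
      have h3 := ILv.filter (fun e => decide (e.1 = c)) hNI
      rw [filter_retag_nil g1 L1 c hi] at h3
      rw [hqs]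
      simp only
      rw [h3.nil_left', filter_retag g2 L2 c _ hj, snd_retag, hL2f]
  -- the LDS bound
  have hWsnd := ILv.map Prod.snd hWI
  rw [snd_retag, snd_retag, hM1, hM2] at hWsnd
  have hLDS : LDS (W.map Prod.snd) ≤ ℓ + Lam (k - s + 1) A'' := by
    have := LDS_ilv_le hWsnd
    omega
  have hmem : LDS (W.map Prod.snd) ∈ {r | ∃ (qs : Fin k → List ℤ) (C : List ℤ),
      KInterleave qs A ∧ KInterleave qs C ∧ LDS C = r} := ⟨qs, W.map Prod.snd, hAq, hCq, rfl⟩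
  have hfin : Lam k A ≤ LDS (W.map Prod.snd) := Nat.sInf_le hmem
  rw [hA] at hfin
  omega
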